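/- The control variate M^{(1)}_{Δ,T} := Σ_{j=1}^{J} Σ_{r=1}^{m} Σ_{1≤s_1<…<s_r≤m} a_{j,r,s}(X_{Δ,(j−1)Δ}) ∏_{i=1}^{r} ξ_j^{s_i} satisfies Var[f(X_{Δ,T}) − M^{(1)}_{Δ,T}] = 0. -/

import Mathlib

open MeasureTheory ProbabilityTheory Finset

noncomputable section

/-- Map a boolean to `±1`. -/
def pm (b : Bool) : ℝ := if b then 1 else -1

/-- Law of a fair `±1` coin: `P(1) = P(-1) = 1/2`. -/
def coinLaw : Measure ℝ :=
  (1 / 2 : ENNReal) • Measure.dirac (1 : ℝ) + (1 / 2 : ENNReal) • Measure.dirac (-1 : ℝ)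

/-- Backward recursion: `qA Φ f k = q_{J-k}`, i.e. `qA Φ f 0 = q_J = f` and
`q_{j-1}(x) = 2^{-m} Σ_{y ∈ {-1,1}^m} q_j(Φ x y)`. -/
def qA {d m : ℕ} (Φ : (Fin d → ℝ) → (Fin m → ℝ) → Fin d → ℝ)
    (f : (Fin d → ℝ) → ℝ) : ℕ → (Fin d → ℝ) → ℝ
  | 0 => f
  | k + 1 => fun x =>
      ((2 : ℝ) ^ m)⁻¹ * ∑ b : Fin m → Bool, qA Φ f k (Φ x fun i => pm (b i))

/-- Coefficient `a_{j,r,s}` with `k = J - j`, encoding the strictly increasing tuple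
`1 ≤ s_1 < … < s_r ≤ m` as the (nonempty) subset `S = {s_1,…,s_r} ⊆ {1,…,m}`:
`a_{j,S}(x) = 2^{-m} Σ_{y ∈ {-1,1}^m} (Π_{i∈S} y^i) q_j(Φ x y)`. -/
def aA {d m : ℕ} (Φ : (Fin d → ℝ) → (Fin m → ℝ) → Fin d → ℝ)
    (f : (Fin d → ℝ) → ℝ) (k : ℕ) (S : Finset (Fin m)) (x : Fin d → ℝ) : ℝ :=
  ((2 : ℝ) ^ m)⁻¹ *
    ∑ b : Fin m → Bool, (∏ i ∈ S, pm (b i)) * qA Φ f k (Φ x fun i => pm (b i))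

/-- The discretisation scheme: `XA Φ x0 ξ 0 = x0`,
`XA Φ x0 ξ j = Φ (XA Φ x0 ξ (j-1)) ξ_j`. -/
def XA {d m : ℕ} {Ω : Type*} (Φ : (Fin d → ℝ) → (Fin m → ℝ) → Fin d → ℝ)
    (x0 : Fin d → ℝ) (ξ : ℕ → Ω → Fin m → ℝ) : ℕ → Ω → Fin d → ℝ
  | 0 => fun _ => x0
  | j + 1 => fun ω => Φ (XA Φ x0 ξ j ω) (ξ (j + 1) ω)


-- auxiliary lemmas
lemma sum_chi {m : ℕ} (b c : Fin m → Bool) :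
    ∑ S : Finset (Fin m), (∏ i ∈ S, pm (b i)) * (∏ i ∈ S, pm (c i))
      = if b = c then (2:ℝ)^m else 0 := by
  have h1 : ∀ S : Finset (Fin m),
      (∏ i ∈ S, pm (b i)) * (∏ i ∈ S, pm (c i)) = ∏ i ∈ S, (pm (b i) * pm (c i)) :=
    fun S => (Finset.prod_mul_distrib).symm
  simp_rw [h1]
  have h2 : ∑ S : Finset (Fin m), ∏ i ∈ S, (pm (b i) * pm (c i))
      = ∏ i : Fin m, (pm (b i) * pm (c i) + 1) := by
    rw [Fintype.prod_add]
    simp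
  rw [h2]
  have h3 : ∀ i, pm (b i) * pm (c i) + 1 = if b i = c i then (2:ℝ) else 0 := by
    intro i; cases hb : b i <;> cases hc : c i <;> simp [pm] <;> norm_num
  simp_rw [h3]
  by_cases h : b = c
  · subst h; simp
  · rw [if_neg h]
    obtain ⟨i, hi⟩ := Function.ne_iff.mp h
    exact Finset.prod_eq_zero (Finset.mem_univ i) (by simp [hi])

lemma walsh {m : ℕ} (g : (Fin m → Bool) → ℝ) (c : Fin m → Bool) :
    ∑ S : Finset (Fin m),
      (((2:ℝ)^m)⁻¹ * ∑ b : Fin m → Bool, (∏ i ∈ S, pm (b i)) * g b) * ∏ i ∈ S, pm (c i)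
      = g c := by
  have key : ∑ S : Finset (Fin m),
      (((2:ℝ)^m)⁻¹ * ∑ b : Fin m → Bool, (∏ i ∈ S, pm (b i)) * g b) * ∏ i ∈ S, pm (c i)
      = ∑ b : Fin m → Bool, ((2:ℝ)^m)⁻¹ *
          (g b * ∑ S : Finset (Fin m), (∏ i ∈ S, pm (b i)) * (∏ i ∈ S, pm (c i))) := by
    simp_rw [Finset.mul_sum]
    rw [Finset.sum_comm]
    apply Finset.sum_congr rfl
    intro b _
    rw [Finset.sum_mul]
    apply Finset.sum_congr rfl
    intro S _
    ring
  rw [key]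
  simp_rw [sum_chi]
  rw [Finset.sum_eq_single c]
  · rw [if_pos rfl, mul_comm (g c), inv_mul_cancel_left₀ (by positivity)]
  · intro b _ hb; simp [hb]
  · simp

lemma step_lem {d m : ℕ} (Φ : (Fin d → ℝ) → (Fin m → ℝ) → Fin d → ℝ)
    (f : (Fin d → ℝ) → ℝ) (k : ℕ) (x : Fin d → ℝ) (c : Fin m → Bool) :
    qA Φ f (k+1) x + ∑ S ∈ (Finset.univ : Finset (Finset (Fin m))).filter (fun S => S.Nonempty),
      aA Φ f k S x * ∏ i ∈ S, pm (c i)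
    = qA Φ f k (Φ x fun i => pm (c i)) := by
  have hw := walsh (fun b => qA Φ f k (Φ x fun i => pm (b i))) c
  have hw' : ∑ S : Finset (Fin m), aA Φ f k S x * ∏ i ∈ S, pm (c i)
      = qA Φ f k (Φ x fun i => pm (c i)) := hw
  have hfilter : (Finset.univ : Finset (Finset (Fin m))).filter (fun S => S.Nonempty)
      = (Finset.univ : Finset (Finset (Fin m))).erase ∅ := by
    ext S; simp [Finset.nonempty_iff_ne_empty]
  have hempty : aA Φ f k ∅ x * ∏ i ∈ (∅ : Finset (Fin m)), pm (c i) = qA Φ f (k+1) x := by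
    simp [aA, qA]
  rw [hfilter, ← hw',
    ← Finset.add_sum_erase Finset.univ (fun S => aA Φ f k S x * ∏ i ∈ S, pm (c i))
      (Finset.mem_univ (∅ : Finset (Fin m))), hempty]

lemma telescope {d m : ℕ} (Φ : (Fin d → ℝ) → (Fin m → ℝ) → Fin d → ℝ)
    (f : (Fin d → ℝ) → ℝ) (x0 : Fin d → ℝ) {Ω : Type*} (ξ : ℕ → Ω → Fin m → ℝ)
    (J : ℕ) (ω : Ω)
    (hgood : ∀ j, 1 ≤ j → j ≤ J → ∃ c : Fin m → Bool, ξ j ω = fun i => pm (c i)) :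
    ∀ n, n ≤ J →
      qA Φ f J x0 + ∑ j ∈ Finset.Icc 1 n,
          ∑ S ∈ (Finset.univ : Finset (Finset (Fin m))).filter (fun S => S.Nonempty),
            aA Φ f (J - j) S (XA Φ x0 ξ (j - 1) ω) * ∏ i ∈ S, ξ j ω i
      = qA Φ f (J - n) (XA Φ x0 ξ n ω) := by
  intro n
  induction n with
  | zero => intro _; simp [XA]
  | succ n ih =>
    intro h
    obtain ⟨c, hc⟩ := hgood (n+1) (by omega) h
    rw [Finset.sum_Icc_succ_top (by omega), ← add_assoc, ih (by omega)]
    have hJn : J - n = (J - (n+1)) + 1 := by omega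
    rw [hJn]
    have hX : XA Φ x0 ξ (n+1) ω = Φ (XA Φ x0 ξ n ω) (ξ (n+1) ω) := rfl
    rw [hX, hc]
    simp only [Nat.add_sub_cancel]
    exact step_lem Φ f (J - (n+1)) (XA Φ x0 ξ n ω) c

/-- The control variate
`M^{(1)}_{Δ,T} = Σ_{j=1}^J Σ_{∅ ≠ S ⊆ {1,…,m}} a_{j,S}(X_{Δ,(j-1)Δ}) Π_{i∈S} ξ_j^i`
satisfies `Var[f(X_{Δ,T}) − M^{(1)}_{Δ,T}] = 0`. -/
theorem stmt2
    {d m : ℕ} (T : ℝ) (hT : 0 < T) (x0 : Fin d → ℝ) (J : ℕ) (hJ : 1 ≤ J)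
    {Ω : Type*} [MeasurableSpace Ω] (P : Measure Ω) [IsProbabilityMeasure P]
    (ξ : ℕ → Ω → Fin m → ℝ) (hξmeas : ∀ j, Measurable (ξ j))
    (hindep : iIndepFun
      (fun p : ℕ × Fin m => fun ω => ξ p.1 ω p.2) P)
    (hdist : ∀ j k, Measure.map (fun ω => ξ j ω k) P = coinLaw)
    (Φ : (Fin d → ℝ) → (Fin m → ℝ) → Fin d → ℝ)
    (hΦ : Measurable fun p : (Fin d → ℝ) × (Fin m → ℝ) => Φ p.1 p.2)
    (f : (Fin d → ℝ) → ℝ) (hf : Measurable f) :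
    variance
      (fun ω => f (XA Φ x0 ξ J ω)
        - ∑ j ∈ Finset.Icc 1 J,
            ∑ S ∈ (Finset.univ : Finset (Finset (Fin m))).filter (fun S => S.Nonempty),
              aA Φ f (J - j) S (XA Φ x0 ξ (j - 1) ω) * ∏ i ∈ S, ξ j ω i) P = 0 := by
  classical
  set X : Ω → ℝ := fun ω => f (XA Φ x0 ξ J ω)
        - ∑ j ∈ Finset.Icc 1 J,
            ∑ S ∈ (Finset.univ : Finset (Finset (Fin m))).filter (fun S => S.Nonempty),
              aA Φ f (J - j) S (XA Φ x0 ξ (j - 1) ω) * ∏ i ∈ S, ξ j ω i with hX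
  -- each coordinate of each ξ_j is a.s. ±1
  have h1 : ∀ j i, ∀ᵐ ω ∂P, ξ j ω i = 1 ∨ ξ j ω i = -1 := by
    intro j i
    have hm : Measurable fun ω => ξ j ω i := (measurable_pi_apply i).comp (hξmeas j)
    have hset : MeasurableSet {x : ℝ | ¬(x = 1 ∨ x = -1)} :=
      (((measurableSet_singleton (1:ℝ)).union (measurableSet_singleton (-1:ℝ)))).compl
    rw [ae_iff]
    have : {ω | ¬(ξ j ω i = 1 ∨ ξ j ω i = -1)}
        = (fun ω => ξ j ω i) ⁻¹' {x : ℝ | ¬(x = 1 ∨ x = -1)} := rfl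
    rw [this, ← Measure.map_apply hm hset, hdist j i]
    simp [coinLaw, Measure.dirac_apply']
  have hgood : ∀ᵐ ω ∂P, ∀ j : ℕ, ∀ i : Fin m, ξ j ω i = 1 ∨ ξ j ω i = -1 := by
    rw [ae_all_iff]
    intro j
    rw [ae_all_iff]
    exact h1 j
  -- a.s., X is the constant qA Φ f J x0
  have hae : X =ᵐ[P] fun _ => qA Φ f J x0 := by
    filter_upwards [hgood] with ω hω
    have hg : ∀ j, 1 ≤ j → j ≤ J → ∃ c : Fin m → Bool, ξ j ω = fun i => pm (c i) := by
      intro j _ _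
      refine ⟨fun i => if ξ j ω i = 1 then true else false, ?_⟩
      funext i
      rcases hω j i with h | h <;> simp [pm, h] <;> norm_num
    have ht := telescope Φ f x0 ξ J ω hg J le_rfl
    simp only [Nat.sub_self] at ht
    have hq0 : qA Φ f 0 (XA Φ x0 ξ J ω) = f (XA Φ x0 ξ J ω) := rfl
    rw [hq0] at ht
    simp only [hX]
    linarith [ht]
  have hint : P[X] = qA Φ f J x0 := by
    rw [integral_congr_ae hae]
    simp
  rw [variance, evariance]
  rw [hint]
  have hz : (fun ω => (‖X ω - qA Φ f J x0‖ₑ ^ 2))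
      =ᵐ[P] fun _ => (0 : ENNReal) := by
    filter_upwards [hae] with ω h
    simp [h]
  rw [lintegral_congr_ae hz]
  simp


end
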